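/- Let μ > 0 and let M ≥ 2 be an even integer. For l ∈ {0, 1, …, M−1} set α_l = √μ·e^{2πil/M}. Then for all m, n, m', n' ∈ ℕ: (1/(2M))·Σ_{l=0}^{M−1} [c_{α_l}(m)·c_{α_l}(n)·conj(c_{α_l}(m')·c_{α_l}(n')) + c_{α_l}(m)·c_{−α_l}(n)·conj(c_{α_l}(m')·c_{−α_l}(n'))] = Σ_{j=0}^{M−1} \tildeP_{j|2μ}·(1/2)·[g_{j,2μ}(m,n)·g_{j,2μ}(m',n') + g'_{j,2μ}(m,n)·g'_{j,2μ}(m',n')]. (That is, the equal mixture of the in-phase pair |α_l⟩|α_l⟩ and the anti-phase pair |α_l⟩|−α_l⟩, averaged over the M uniformly spaced phases, equals the mixture Σ_{j=0}^{M−1} \tildeP_{j|2μ} τ_{j|2μ} with τ_{j|2μ} = ½|ĵ_{2μ}⟩⟨ĵ_{2μ}| + ½|ĵ'_{2μ}⟩⟨ĵ'_{2μ}|; this is the paper's decomposition ρ_β = (2/M) Σ_{j=0}^{M−1} \tildeP_{j|2β} τ_{j|2β} of the retained decoy- and code-mode states, up to the overall factor 2/M.) -/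

import Mathlib

/-- Coherent-state coefficient: `c_α(n) = e^{−|α|²/2} α^n / √(n!)`. -/
noncomputable def coherentCoeff (α : ℂ) (n : ℕ) : ℂ :=
  Complex.exp (-((‖α‖ : ℝ) : ℂ) ^ 2 / 2) * α ^ n / (Real.sqrt (Nat.factorial n) : ℂ)

/-- Poisson probability with mean `lam`: `P_{j|lam} = e^{−lam} lam^j / j!`. -/
noncomputable def poisson (lam : ℝ) (j : ℕ) : ℝ :=
  Real.exp (-lam) * lam ^ j / (Nat.factorial j : ℝ)

/-- `tildeP M lam j = Σ_{n=0}^∞ P_{j+Mn|lam}`. -/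
noncomputable def tildeP (M : ℕ) (lam : ℝ) (j : ℕ) : ℝ :=
  ∑' n : ℕ, poisson lam (j + M * n)

/-- Two-mode coefficients of the state `|ĵ_lam⟩`. -/
noncomputable def g (M : ℕ) (lam : ℝ) (j : ℕ) (p : ℕ × ℕ) : ℝ :=
  if (p.1 + p.2) % M = j % M then
    Real.sqrt (poisson lam (p.1 + p.2) / tildeP M lam j)
      * Real.sqrt ((Nat.factorial (p.1 + p.2) : ℝ)
          / (2 ^ (p.1 + p.2) * Nat.factorial p.1 * Nat.factorial p.2))
  else 0

/-- Two-mode coefficients of the state `|ĵ'_lam⟩`: `g'_{j,lam}(m,n) = (−1)^m g_{j,lam}(m,n)`. -/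
noncomputable def g' (M : ℕ) (lam : ℝ) (j : ℕ) (p : ℕ × ℕ) : ℝ :=
  (-1 : ℝ) ^ p.1 * g M lam j p


/-! ### Auxiliary lemmas -/

lemma poisson_pos {lam : ℝ} (h : 0 < lam) (j : ℕ) : 0 < poisson lam j := by
  unfold poisson
  have := Nat.factorial_pos j
  positivity

lemma poisson_nonneg {lam : ℝ} (h : 0 < lam) (j : ℕ) : 0 ≤ poisson lam j :=
  (poisson_pos h j).le

lemma tildeP_pos (M : ℕ) (hM : 0 < M) {lam : ℝ} (h : 0 < lam) (j : ℕ) :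
    0 < tildeP M lam j := by
  have h1 : Summable (fun k : ℕ => Real.exp (-lam) * (lam ^ k / (Nat.factorial k : ℝ))) :=
    (Real.summable_pow_div_factorial lam).mul_left _
  have h2 : Summable (fun k => poisson lam k) := by
    refine h1.congr fun k => ?_
    unfold poisson; ring
  have hs : Summable (fun n : ℕ => poisson lam (j + M * n)) := by
    refine h2.comp_injective fun a b hab => ?_
    have : j + M * a = j + M * b := hab
    exact Nat.eq_of_mul_eq_mul_left hM (Nat.add_left_cancel this)
  have h0 : poisson lam (j + M * 0) ≤ tildeP M lam j :=
    Summable.le_tsum hs 0 (fun i _ => poisson_nonneg h _)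
  exact lt_of_lt_of_le (poisson_pos h _) h0

lemma sqrt_pow_comm {x : ℝ} (h : 0 ≤ x) (n : ℕ) :
    Real.sqrt (x ^ n) = (Real.sqrt x) ^ n := by
  induction n with
  | zero => simp
  | succ k ih => rw [pow_succ, pow_succ, Real.sqrt_mul (pow_nonneg h k), ih]

lemma sqrt_exp_neg_two (μ : ℝ) : Real.sqrt (Real.exp (-(2 * μ))) = Real.exp (-μ) := by
  rw [show (-(2 * μ)) = -μ + -μ by ring, Real.exp_add,
    Real.sqrt_mul_self (Real.exp_pos _).le]

lemma sqrtT_g (M : ℕ) (hM : 0 < M) {μ : ℝ} (hμ : 0 < μ) (j a b : ℕ)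
    (h : (a + b) % M = j % M) :
    Real.sqrt (tildeP M (2 * μ) j) * g M (2 * μ) j (a, b)
      = Real.exp (-μ) * Real.sqrt μ ^ (a + b)
          / (Real.sqrt (Nat.factorial a) * Real.sqrt (Nat.factorial b)) := by
  have h2 : (0 : ℝ) < 2 * μ := by linarith
  have hT := tildeP_pos M hM h2 j
  have hTne : Real.sqrt (tildeP M (2 * μ) j) ≠ 0 := by positivity
  unfold g
  rw [if_pos (by simpa using h)]
  rw [Real.sqrt_div (poisson_nonneg h2 _)]
  rw [show Real.sqrt (tildeP M (2 * μ) j)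
        * (Real.sqrt (poisson (2 * μ) (a + b)) / Real.sqrt (tildeP M (2 * μ) j)
          * Real.sqrt (((a + b).factorial : ℝ)
              / (2 ^ (a + b) * Nat.factorial a * Nat.factorial b)))
      = Real.sqrt (poisson (2 * μ) (a + b))
          * Real.sqrt (((a + b).factorial : ℝ)
              / (2 ^ (a + b) * Nat.factorial a * Nat.factorial b)) by
    field_simp]
  rw [← Real.sqrt_mul (poisson_nonneg h2 _)]
  have hPF : poisson (2 * μ) (a + b)
      * (((a + b).factorial : ℝ) / (2 ^ (a + b) * Nat.factorial a * Nat.factorial b))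
      = Real.exp (-(2 * μ)) * μ ^ (a + b) / ((Nat.factorial a : ℝ) * (Nat.factorial b : ℝ)) := by
    unfold poisson
    have hf : ((a + b).factorial : ℝ) ≠ 0 := by positivity
    have hfa : ((a).factorial : ℝ) ≠ 0 := by positivity
    have hfb : ((b).factorial : ℝ) ≠ 0 := by positivity
    rw [mul_pow]
    field_simp
  rw [hPF, Real.sqrt_div (by positivity), Real.sqrt_mul (Real.exp_pos _).le,
    sqrt_exp_neg_two, sqrt_pow_comm hμ.le,
    Real.sqrt_mul (by positivity : (0:ℝ) ≤ (Nat.factorial a : ℝ))]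

/-- The "single-mode real amplitude" `R_μ(k) = e^{-μ/2} √μ^k / √k!`. -/
noncomputable def Rcoef (μ : ℝ) (k : ℕ) : ℝ :=
  Real.exp (-(μ / 2)) * Real.sqrt μ ^ k / Real.sqrt (Nat.factorial k)

lemma Rcoef_mul (μ : ℝ) (a b : ℕ) :
    Real.exp (-μ) * Real.sqrt μ ^ (a + b)
        / (Real.sqrt (Nat.factorial a) * Real.sqrt (Nat.factorial b))
      = Rcoef μ a * Rcoef μ b := by
  unfold Rcoef
  rw [pow_add, show Real.exp (-μ) = Real.exp (-(μ / 2)) * Real.exp (-(μ / 2)) by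
    rw [← Real.exp_add]; congr 1; ring]
  ring

lemma coherentCoeff_neg (α : ℂ) (k : ℕ) :
    coherentCoeff (-α) k = (-1 : ℂ) ^ k * coherentCoeff α k := by
  unfold coherentCoeff
  rw [norm_neg, neg_pow]
  ring

lemma coherentCoeff_eval {μ : ℝ} (hμ : 0 ≤ μ) (θ : ℝ) (k : ℕ) :
    coherentCoeff ((Real.sqrt μ : ℂ) * Complex.exp (θ * Complex.I)) k
      = ((Rcoef μ k : ℝ) : ℂ) * Complex.exp (θ * Complex.I) ^ k := by
  unfold coherentCoeff Rcoef
  have habs : ‖(Real.sqrt μ : ℂ) * Complex.exp (θ * Complex.I)‖ = Real.sqrt μ := by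
    rw [norm_mul, Complex.norm_exp_ofReal_mul_I, Complex.norm_real,
      Real.norm_of_nonneg (Real.sqrt_nonneg _), mul_one]
  rw [habs]
  have hsq : (-(Real.sqrt μ : ℂ) ^ 2 / 2) = ((-(μ / 2) : ℝ) : ℂ) := by
    have : ((Real.sqrt μ : ℝ) : ℂ) ^ 2 = ((μ : ℝ) : ℂ) := by
      norm_cast
      exact Real.sq_sqrt hμ
    rw [this]
    push_cast
    ring
  rw [hsq, ← Complex.ofReal_exp]
  push_cast
  ring

lemma conj_exp_I (θ : ℝ) :
    (starRingEnd ℂ) (Complex.exp (θ * Complex.I)) = Complex.exp (-(θ * Complex.I)) := by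
  rw [← Complex.exp_conj]
  congr 1
  simp [Complex.conj_I]
lemma phase_sum (M : ℕ) (hM : 0 < M) (K K' : ℕ) :
    ∑ l ∈ Finset.range M,
        Complex.exp (((2 * Real.pi / M : ℝ) : ℂ) * ((K : ℂ) - (K' : ℂ)) * Complex.I) ^ l
      = if K % M = K' % M then (M : ℂ) else 0 := by
  have hM0 : (M : ℂ) ≠ 0 := Nat.cast_ne_zero.2 hM.ne'
  by_cases hc : K % M = K' % M
  · rw [if_pos hc]
    obtain ⟨d, hd⟩ := (Nat.modEq_iff_dvd (n := M) (a := K) (b := K')).1 hc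
    have harg : (((2 * Real.pi / M : ℝ) : ℂ) * ((K : ℂ) - (K' : ℂ)) * Complex.I)
        = ((-d : ℤ) : ℂ) * (2 * (Real.pi : ℂ) * Complex.I) := by
      have hKK : ((K' : ℂ)) - (K : ℂ) = (M : ℂ) * (d : ℂ) := by exact_mod_cast hd
      push_cast
      field_simp
      linear_combination -hKK
    rw [harg, Complex.exp_int_mul_two_pi_mul_I]
    simp
  · rw [if_neg hc]
    have hzM : Complex.exp (((2 * Real.pi / M : ℝ) : ℂ)
        * ((K : ℂ) - (K' : ℂ)) * Complex.I) ^ M = 1 := by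
      rw [← Complex.exp_nat_mul]
      have : ((M : ℂ)) * (((2 * Real.pi / M : ℝ) : ℂ) * ((K : ℂ) - (K' : ℂ)) * Complex.I)
          = (((K : ℤ) - (K' : ℤ) : ℤ) : ℂ) * (2 * (Real.pi : ℂ) * Complex.I) := by
        push_cast
        field_simp
      rw [this, Complex.exp_int_mul_two_pi_mul_I]
    have hz1 : Complex.exp (((2 * Real.pi / M : ℝ) : ℂ)
        * ((K : ℂ) - (K' : ℂ)) * Complex.I) ≠ 1 := by
      intro h1
      obtain ⟨t, ht⟩ := Complex.exp_eq_one_iff.1 h1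
      have hπ : ((Real.pi : ℂ)) ≠ 0 := Complex.ofReal_ne_zero.2 Real.pi_ne_zero
      push_cast at ht
      field_simp at ht
      have h2 : ((K : ℂ) - (K' : ℂ)) * (2 * (Real.pi : ℂ) * Complex.I)
          = ((t : ℂ) * (M : ℂ)) * (2 * (Real.pi : ℂ) * Complex.I) := by
        linear_combination (2 * (Real.pi : ℂ) * Complex.I) * ht
      have h3 : ((K : ℂ)) - (K' : ℂ) = (t : ℂ) * (M : ℂ) :=
        mul_right_cancel₀ (by simp [hπ, Complex.I_ne_zero]) h2
      have h4 : (K : ℤ) - (K' : ℤ) = t * M := by exact_mod_cast h3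
      exact hc ((Nat.modEq_iff_dvd (n := M) (a := K) (b := K')).2 ⟨-t, by linarith⟩)
    rw [geom_sum_eq hz1, hzM]
    simp

lemma mix_alg (t a b : ℝ) (m m' : ℕ) :
    t * t * (1 / 2) * (a * b + (-1 : ℝ) ^ m * a * ((-1 : ℝ) ^ m' * b))
      = (1 / 2) * (1 + (-1 : ℝ) ^ (m + m')) * ((t * a) * (t * b)) := by
  rw [pow_add]; ring

/-- The equal mixture of the in-phase pair `|α_l⟩|α_l⟩` and anti-phase pair `|α_l⟩|−α_l⟩`,
averaged over the `M` uniformly spaced phases, equals the mixture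
`Σ_{j=0}^{M−1} tildeP_{j|2μ} τ_{j|2μ}` with `τ_{j|2μ} = ½|ĵ_{2μ}⟩⟨ĵ_{2μ}| + ½|ĵ\'_{2μ}⟩⟨ĵ\'_{2μ}|`,
entrywise in the photon-number basis (up to the overall factor `2/M`). -/
theorem retained_state_decomposition (μ : ℝ) (hμ : 0 < μ)
    (M : ℕ) (hM : 2 ≤ M) (hMeven : Even M) (α : ℕ → ℂ)
    (hα : ∀ l, α l = (Real.sqrt μ : ℂ)
      * Complex.exp (2 * Real.pi * l / M * Complex.I)) (m n m' n' : ℕ) :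
    (1 / (2 * (M : ℂ))) * ∑ l ∈ Finset.range M,
        (coherentCoeff (α l) m * coherentCoeff (α l) n
            * (starRingEnd ℂ) (coherentCoeff (α l) m' * coherentCoeff (α l) n')
          + coherentCoeff (α l) m * coherentCoeff (-(α l)) n
            * (starRingEnd ℂ) (coherentCoeff (α l) m' * coherentCoeff (-(α l)) n')) =
      ((∑ j ∈ Finset.range M,
          tildeP M (2 * μ) j * (1 / 2)
            * (g M (2 * μ) j (m, n) * g M (2 * μ) j (m', n')
              + g' M (2 * μ) j (m, n) * g' M (2 * μ) j (m', n')) : ℝ) : ℂ) := by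
  have hμ0 : (0 : ℝ) ≤ μ := hμ.le
  have hMpos : 0 < M := by omega
  have hM0 : (M : ℂ) ≠ 0 := Nat.cast_ne_zero.2 hMpos.ne'
  have hsummand : ∀ l ∈ Finset.range M,
      (coherentCoeff (α l) m * coherentCoeff (α l) n
          * (starRingEnd ℂ) (coherentCoeff (α l) m' * coherentCoeff (α l) n')
        + coherentCoeff (α l) m * coherentCoeff (-(α l)) n
          * (starRingEnd ℂ) (coherentCoeff (α l) m' * coherentCoeff (-(α l)) n'))
      = (((1 + (-1 : ℝ) ^ (n + n'))
            * (Rcoef μ m * Rcoef μ n * Rcoef μ m' * Rcoef μ n') : ℝ) : ℂ)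
          * Complex.exp (((2 * Real.pi / M : ℝ) : ℂ)
              * (((m + n : ℕ) : ℂ) - ((m' + n' : ℕ) : ℂ)) * Complex.I) ^ l := by
    intro l _
    have hαl : α l = (Real.sqrt μ : ℂ)
        * Complex.exp (((2 * Real.pi / M * l : ℝ) : ℂ) * Complex.I) := by
      rw [hα l]
      congr 2
      push_cast
      ring
    rw [hαl]
    simp only [coherentCoeff_neg, coherentCoeff_eval hμ0]
    rw [show Complex.exp (((2 * Real.pi / M : ℝ) : ℂ)
          * (((m + n : ℕ) : ℂ) - ((m' + n' : ℕ) : ℂ)) * Complex.I) ^ l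
        = Complex.exp (((2 * Real.pi / M * l : ℝ) : ℂ) * Complex.I) ^ (m + n)
            * Complex.exp (-(((2 * Real.pi / M * l : ℝ) : ℂ) * Complex.I)) ^ (m' + n') by
      rw [← Complex.exp_nat_mul, ← Complex.exp_nat_mul, ← Complex.exp_nat_mul,
        ← Complex.exp_add]
      congr 1
      push_cast
      ring]
    simp only [map_mul, map_pow, map_neg, map_one, Complex.conj_ofReal, conj_exp_I]
    push_cast
    ring
  rw [Finset.sum_congr rfl hsummand, ← Finset.mul_sum, phase_sum M hMpos (m + n) (m' + n')]
  by_cases hc : (m + n) % M = (m' + n') % M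
  · rw [if_pos hc]
    have hmod2 : (m + n) % 2 = (m' + n') % 2 := Nat.ModEq.of_dvd hMeven.two_dvd hc
    have hev : (m + m' + (n + n')) % 2 = 0 := by omega
    have hpar : ((-1 : ℝ)) ^ (m + m') = (-1) ^ (n + n') := by
      calc ((-1 : ℝ)) ^ (m + m')
          = (-1) ^ (m + m') * (-1) ^ (m + m' + (n + n')) := by
            rw [(Nat.even_iff.2 hev).neg_one_pow, mul_one]
        _ = (-1) ^ (n + n') * (-1) ^ ((m + m') + (m + m')) := by
            rw [← pow_add, ← pow_add]; congr 1; ring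
        _ = (-1) ^ (n + n') := by rw [Even.neg_one_pow ⟨m + m', rfl⟩, mul_one]
    have hT := tildeP_pos M hMpos (by linarith : (0 : ℝ) < 2 * μ) ((m + n) % M)
    have hTT : tildeP M (2 * μ) ((m + n) % M)
        = Real.sqrt (tildeP M (2 * μ) ((m + n) % M))
          * Real.sqrt (tildeP M (2 * μ) ((m + n) % M)) :=
      (Real.mul_self_sqrt hT.le).symm
    have hRHS : ∑ j ∈ Finset.range M,
        tildeP M (2 * μ) j * (1 / 2)
          * (g M (2 * μ) j (m, n) * g M (2 * μ) j (m', n')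
            + g' M (2 * μ) j (m, n) * g' M (2 * μ) j (m', n'))
        = (1 + (-1 : ℝ) ^ (n + n'))
            * (Rcoef μ m * Rcoef μ n * Rcoef μ m' * Rcoef μ n') / 2 := by
      rw [Finset.sum_eq_single_of_mem ((m + n) % M)
        (Finset.mem_range.2 (Nat.mod_lt _ hMpos))
        (fun j hj hne => by
          have hno : ¬ ((m + n) % M = j % M) := by
            rw [Nat.mod_eq_of_lt (Finset.mem_range.1 hj)]
            exact fun hh => hne hh.symm
          have hgz : g M (2 * μ) j (m, n) = 0 := by
            unfold g
            rw [if_neg (by simpa using hno)]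
          simp [g', hgz])]
      have h1 : (m + n) % M = ((m + n) % M) % M :=
        (Nat.mod_mod_of_dvd (m + n) dvd_rfl).symm
      have h2 : (m' + n') % M = ((m + n) % M) % M := by
        rw [← hc]; exact h1
      have e1 := sqrtT_g M hMpos hμ ((m + n) % M) m n h1
      have e2 := sqrtT_g M hMpos hμ ((m + n) % M) m' n' h2
      rw [Rcoef_mul] at e1 e2
      simp only [g']
      rw [hTT, mix_alg, e1, e2, hpar]
      ring
    rw [hRHS]
    push_cast
    field_simp
  · rw [if_neg hc]
    have hRHS0 : ∑ j ∈ Finset.range M,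
        tildeP M (2 * μ) j * (1 / 2)
          * (g M (2 * μ) j (m, n) * g M (2 * μ) j (m', n')
            + g' M (2 * μ) j (m, n) * g' M (2 * μ) j (m', n')) = 0 := by
      refine Finset.sum_eq_zero fun j hj => ?_
      by_cases h1 : (m + n) % M = j % M
      · have h2 : ¬ ((m' + n') % M = j % M) := fun h2 => hc (h1.trans h2.symm)
        have hgz : g M (2 * μ) j (m', n') = 0 := by
          unfold g
          rw [if_neg (by simpa using h2)]
        simp [g', hgz]
      · have hgz : g M (2 * μ) j (m, n) = 0 := by
          unfold g
          rw [if_neg (by simpa using h1)]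
        simp [g', hgz]
    rw [hRHS0]
    simp
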